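/- Let D be a convex subset of ℝⁿ. If X is a random vector (on some probability space) taking values in ℝⁿ such that X is integrable and Pr{X ∈ D} = 1, then the expectation E[X] belongs to D. -/

import Mathlib

open MeasureTheory ProbabilityTheory Set Filter Topology

universe u v

theorem aux_mem (N : ℕ) :
    ∀ (E : Type u) [NormedAddCommGroup E] [InnerProductSpace ℝ E] [FiniteDimensional ℝ E]
      [MeasurableSpace E] [BorelSpace E] (_ : Module.finrank ℝ E ≤ N)
      (Ω : Type v) [MeasurableSpace Ω] (μ : Measure Ω) [IsProbabilityMeasure μ]
      (D : Set E) (_ : Convex ℝ D) (X : Ω → E) (_ : Measurable X) (_ : Integrable X μ)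
      (_ : μ {ω | X ω ∈ D} = 1), (∫ ω, X ω ∂μ) ∈ D := by
  induction N with
  | zero =>
    intro E _ _ _ _ _ hdim Ω _ μ _ D hD X hXm hXi hXD
    have hsub : Subsingleton E := Module.finrank_zero_iff.mp (Nat.le_zero.mp hdim)
    have hne : {ω | X ω ∈ D}.Nonempty := by
      apply nonempty_of_measure_ne_zero (μ := μ); rw [hXD]; exact one_ne_zero
    obtain ⟨ω₀, hω₀⟩ := hne
    have : (∫ ω, X ω ∂μ) = X ω₀ := Subsingleton.elim _ _
    rwa [this]
  | succ n ih =>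
    intro E _ _ _ _ _ hdim Ω _ μ _ D hD X hXm hXi hXD
    set m : E := ∫ ω, X ω ∂μ with hm
    -- a.e. membership in the closure
    have hmeasC : MeasurableSet {ω | X ω ∈ closure D} :=
      hXm isClosed_closure.measurableSet
    have hC1 : μ {ω | X ω ∈ closure D} = 1 := by
      refine le_antisymm prob_le_one ?_
      rw [← hXD]
      exact measure_mono fun ω hω => subset_closure hω
    have hclos : ∀ᵐ ω ∂μ, X ω ∈ closure D := by
      rw [ae_iff]
      exact (prob_compl_eq_zero_iff hmeasC).mpr hC1
    have hmC : m ∈ closure D := hD.closure.integral_mem isClosed_closure hclos hXi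
    by_cases hmD : m ∈ D
    · exact hmD
    -- find a separating functional
    have hsep : ∃ f : E →L[ℝ] ℝ, (∃ z, f z ≠ 0) ∧ ∀ x ∈ closure D, f (x - m) ≤ 0 := by
      by_cases hint : (interior D).Nonempty
      · obtain ⟨f, hf⟩ := geometric_hahn_banach_open_point hD.interior isOpen_interior
          (fun h => hmD (interior_subset h))
        obtain ⟨y, hy⟩ := hint
        refine ⟨f, ⟨y - m, ?_⟩, ?_⟩
        · have hlt := hf y hy
          intro h
          rw [map_sub, sub_eq_zero] at h
          exact absurd h (ne_of_lt hlt)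
        · intro x hx
          rw [map_sub, sub_nonpos]
          -- limit argument along the segment towards y
          have key : ∀ t : ℝ, t ∈ Ioo (0:ℝ) 1 → f ((1 - t) • x + t • y) < f m := by
            intro t ht
            exact hf _ (hD.combo_closure_interior_mem_interior hx hy (by linarith [ht.2])
              ht.1 (by ring))
          have hcont : Tendsto (fun t : ℝ => f ((1 - t) • x + t • y)) (𝓝[Ioo (0:ℝ) 1] 0)
              (𝓝 (f x)) := by
            have hc : Continuous fun t : ℝ => f ((1 - t) • x + t • y) := by fun_prop
            have := (hc.tendsto 0).mono_left (nhdsWithin_le_nhds (s := Ioo (0:ℝ) 1))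
            simpa using this
          have : NeBot (𝓝[Ioo (0:ℝ) 1] (0:ℝ)) := left_nhdsWithin_Ioo_neBot one_pos
          exact le_of_tendsto hcont (eventually_nhdsWithin_of_forall fun t ht => (key t ht).le)
      · -- D has empty interior: it lies in a proper affine subspace
        have hspan : affineSpan ℝ D ≠ ⊤ := by
          intro h
          exact hint (hD.interior_nonempty_iff_affineSpan_eq_top.mpr h)
        have hclosed : IsClosed ((affineSpan ℝ D : AffineSubspace ℝ E) : Set E) :=
          AffineSubspace.closed_of_finiteDimensional _
        have hsubC : closure D ⊆ (affineSpan ℝ D : Set E) :=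
          closure_minimal (subset_affineSpan ℝ D) hclosed
        have hmA : m ∈ affineSpan ℝ D := hsubC hmC
        set W := (affineSpan ℝ D).direction with hW
        have hWne : W ≠ ⊤ := by
          intro h
          exact hspan ((AffineSubspace.direction_eq_top_iff_of_nonempty ⟨m, hmA⟩).mp h)
        have hWorth : Wᗮ ≠ ⊥ := by
          intro h
          exact hWne (Submodule.orthogonal_eq_bot_iff.mp h)
        obtain ⟨v, hvW, hv0⟩ := Submodule.exists_mem_ne_zero_of_ne_bot hWorth
        refine ⟨innerSL ℝ v, ⟨v, ?_⟩, ?_⟩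
        · simpa using hv0
        · intro x hx
          have hxm : x - m ∈ W := AffineSubspace.vsub_mem_direction (hsubC hx) hmA
          have : inner ℝ v (x - m) = (0:ℝ) :=
            Submodule.mem_orthogonal' W v |>.mp hvW _ hxm
          simp [innerSL_apply_apply, this]
    obtain ⟨f, ⟨z, hz⟩, hfle⟩ := hsep
    -- the function f (X - m) is a.e. nonpositive with zero integral
    have hXmi : Integrable (fun ω => X ω - m) μ := hXi.sub (integrable_const m)
    have hgint : Integrable (fun ω => f (X ω - m)) μ := f.integrable_comp hXmi
    have hintm : (∫ ω, (X ω - m) ∂μ) = 0 := by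
      rw [integral_sub hXi (integrable_const m), integral_const, probReal_univ]
      simp [hm]
    have hintzero : (∫ ω, f (X ω - m) ∂μ) = 0 := by
      rw [f.integral_comp_comm hXmi, hintm, map_zero]
    have hle : ∀ᵐ ω ∂μ, f (X ω - m) ≤ 0 :=
      hclos.mono fun ω hω => hfle _ hω
    have hzero : ∀ᵐ ω ∂μ, f (X ω - m) = 0 := by
      have h1 : (∫ ω, -f (X ω - m) ∂μ) = 0 := by rw [integral_neg, hintzero, neg_zero]
      have h2 : (fun ω => -f (X ω - m)) =ᵐ[μ] 0 :=
        (integral_eq_zero_iff_of_nonneg_ae (hle.mono fun ω h => by simpa using neg_nonneg.mpr h) hgint.neg).mp h1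
      filter_upwards [h2] with ω hω
      exact neg_eq_zero.mp hω
    -- project to the kernel of f and apply induction hypothesis
    set K := LinearMap.ker (f : E →ₗ[ℝ] ℝ) with hK
    have hKne : (K : Submodule ℝ E) ≠ ⊤ := by
      intro h
      have hzK : z ∈ K := by rw [h]; trivial
      exact hz (LinearMap.mem_ker.mp hzK)
    have hKdim : Module.finrank ℝ K ≤ n := by
      have := Submodule.finrank_lt (s := K) hKne
      omega
    set P := Submodule.orthogonalProjectionOnto K with hP
    set X₂ : Ω → K := fun ω => P (X ω - m) with hX₂
    have hX₂m : Measurable X₂ := P.continuous.measurable.comp (hXm.sub measurable_const)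
    have hX₂i : Integrable X₂ μ := P.integrable_comp hXmi
    set D₂ : Set K := {x : K | (x : E) + m ∈ D} with hD₂
    have hD₂c : Convex ℝ D₂ := by
      intro x hx y hy a b ha hb hab
      have h1 : a • ((x : E) + m) + b • ((y : E) + m)
          = (a • (x : E) + b • (y : E)) + (a + b) • m := by module
      have h2 : (((a • x + b • y : K) : E) + m) = a • ((x : E) + m) + b • ((y : E) + m) := by
        push_cast
        rw [h1, hab, one_smul]
      show (((a • x + b • y : K) : E) + m) ∈ D
      rw [h2]
      exact hD hx hy ha hb hab
    have hX₂D : μ {ω | X₂ ω ∈ D₂} = 1 := by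
      have hA : μ {ω | f (X ω - m) = 0}ᶜ = 0 := by
        rw [ae_iff] at hzero
        simpa [compl_setOf] using hzero
      have hsub2 : {ω | X ω ∈ D} ∩ {ω | f (X ω - m) = 0} ⊆ {ω | X₂ ω ∈ D₂} := by
        rintro ω ⟨h1, h2⟩
        have hker : X ω - m ∈ K := h2
        have : ((X₂ ω : K) : E) = X ω - m := by
          rw [hX₂]
          exact Submodule.starProjection_eq_self_iff.mpr hker
        show ((X₂ ω : K) : E) + m ∈ D
        rw [this]
        simpa using h1
      refine le_antisymm prob_le_one ?_
      calc (1:ENNReal) = μ ({ω | X ω ∈ D} ∩ {ω | f (X ω - m) = 0}) := by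
            rw [measure_inter_conull hA, hXD]
        _ ≤ μ {ω | X₂ ω ∈ D₂} := measure_mono hsub2
    have hmem := ih K hKdim Ω μ D₂ hD₂c X₂ hX₂m hX₂i hX₂D
    have hint0 : (∫ ω, X₂ ω ∂μ) = 0 := by
      have h1 : (∫ ω, X₂ ω ∂μ) = P (∫ ω, (X ω - m) ∂μ) := P.integral_comp_comm hXmi
      rw [h1, hintm, map_zero]
    rw [hint0] at hmem
    have : ((0 : K) : E) + m ∈ D := hmem
    simpa using this

theorem statement0 {n : ℕ} {Ω : Type*} [MeasurableSpace Ω] (μ : Measure Ω)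
    [IsProbabilityMeasure μ] (D : Set (EuclideanSpace ℝ (Fin n))) (hD : Convex ℝ D)
    (X : Ω → EuclideanSpace ℝ (Fin n)) (hXm : Measurable X) (hXi : Integrable X μ)
    (hXD : μ {ω | X ω ∈ D} = 1) :
    (∫ ω, X ω ∂μ) ∈ D := by
  exact aux_mem (Module.finrank ℝ (EuclideanSpace ℝ (Fin n))) _ le_rfl _ μ D hD X hXm hXi hXD
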